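/- arXiv:0803.2736 — 4 statements merged into one kernel-verified Lean document; each statement's English description precedes it below -/
import Mathlib

section
/- For every positive integer n and every real x, the derivative of F(x) = e^{x^n} · Σ_{r=0}^∞ (−1)^r n^r x^{1+nr} / ∏_{p=0}^r (1+pn) equals e^{x^n}. (That is, this series multiplied by e^{x^n} is an antiderivative of e^{x^n}.) -/
/-- The denominator product. -/
noncomputable def myP (n r : ℕ) : ℝ := ∏ p ∈ Finset.range (r + 1), (1 + (p : ℝ) * n)

/-- The general term of the series. -/
noncomputable def myg (n r : ℕ) (y : ℝ) : ℝ :=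
  ((-1 : ℝ) ^ r * (n : ℝ) ^ r * y ^ (1 + n * r)) / myP n r

/-- Its derivative in `y`. -/
noncomputable def myg' (n r : ℕ) (y : ℝ) : ℝ :=
  ((-1 : ℝ) ^ r * (n : ℝ) ^ r * ((1 + n * r : ℕ) : ℝ) * y ^ (n * r)) / myP n r

lemma myP_pos (n : ℕ) (r : ℕ) : 0 < myP n r := by
  unfold myP
  apply Finset.prod_pos
  intro p _
  positivity

lemma myg_hasDerivAt (n r : ℕ) (y : ℝ) : HasDerivAt (myg n r) (myg' n r y) y := by
  have h := ((hasDerivAt_pow (1 + n * r) y).const_mul ((-1 : ℝ) ^ r * (n : ℝ) ^ r)).div_const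
    (myP n r)
  have hexp : 1 + n * r - 1 = n * r := by omega
  rw [hexp] at h
  unfold myg myg'
  exact h.congr_deriv (by ring)

lemma myg'_bound (n : ℕ) (hn : 0 < n) (r : ℕ) {R y : ℝ} (hR : 1 ≤ R) (hy : |y| ≤ R) :
    ‖myg' n r y‖ ≤ ((n : ℝ) * R ^ n) ^ r / r.factorial := by
  have hPpos := myP_pos n r
  have hfact : (r.factorial : ℝ) ≤ ∏ p ∈ Finset.range r, (1 + (p : ℝ) * n) := by
    rw [← Finset.prod_range_add_one_eq_factorial]
    push_cast
    apply Finset.prod_le_prod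
    · intro p _; positivity
    · intro p _
      have hn1 : (1 : ℝ) ≤ (n : ℝ) := by exact_mod_cast hn
      nlinarith [Nat.cast_nonneg (α := ℝ) p]
  have hfactpos : (0 : ℝ) < r.factorial := by positivity
  have hQpos : (0 : ℝ) < ∏ p ∈ Finset.range r, (1 + (p : ℝ) * n) := by
    apply Finset.prod_pos; intro p _; positivity
  have hPsplit : myP n r = (∏ p ∈ Finset.range r, (1 + (p : ℝ) * n)) * (1 + (r : ℝ) * n) := by
    unfold myP; rw [Finset.prod_range_succ]
  have hnorm : ‖myg' n r y‖ =
      ((n : ℝ) ^ r * ((1 + n * r : ℕ) : ℝ) * |y| ^ (n * r)) / myP n r := by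
    unfold myg'
    simp only [Real.norm_eq_abs, abs_div, abs_mul, abs_pow, abs_neg, abs_one, one_pow,
      one_mul, Nat.abs_cast, abs_of_pos hPpos]
  rw [hnorm, hPsplit]
  have hcast : ((1 + n * r : ℕ) : ℝ) = 1 + (r : ℝ) * n := by push_cast; ring
  rw [hcast]
  have hrn : (0 : ℝ) < 1 + (r : ℝ) * n := by positivity
  rw [div_le_div_iff₀ (by positivity) hfactpos]
  have hy' : |y| ^ (n * r) ≤ (R ^ n) ^ r := by
    rw [← pow_mul]
    exact pow_le_pow_left₀ (abs_nonneg y) hy _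
  have hnR : ((n : ℝ) * R ^ n) ^ r = (n : ℝ) ^ r * (R ^ n) ^ r := by rw [mul_pow]
  rw [hnR]
  have h1 : (n : ℝ) ^ r * (1 + (r : ℝ) * n) * |y| ^ (n * r) * (r.factorial : ℝ)
      ≤ (n : ℝ) ^ r * (1 + (r : ℝ) * n) * (R ^ n) ^ r *
        (∏ p ∈ Finset.range r, (1 + (p : ℝ) * n)) := by
    apply mul_le_mul
    · apply mul_le_mul_of_nonneg_left hy' (by positivity)
    · exact hfact
    · positivity
    · positivity
  calc (n : ℝ) ^ r * (1 + (r : ℝ) * n) * |y| ^ (n * r) * (r.factorial : ℝ)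
      ≤ (n : ℝ) ^ r * (1 + (r : ℝ) * n) * (R ^ n) ^ r *
        (∏ p ∈ Finset.range r, (1 + (p : ℝ) * n)) := h1
    _ = (n : ℝ) ^ r * (R ^ n) ^ r *
        ((∏ p ∈ Finset.range r, (1 + (p : ℝ) * n)) * (1 + (r : ℝ) * n)) := by ring

theorem stmt_0 (n : ℕ) (hn : 0 < n) (x : ℝ) :
    HasDerivAt (fun y : ℝ => Real.exp (y ^ n) *
      ∑' r : ℕ, ((-1 : ℝ) ^ r * (n : ℝ) ^ r * y ^ (1 + n * r)) /
        ∏ p ∈ Finset.range (r + 1), (1 + (p : ℝ) * n))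
      (Real.exp (x ^ n)) x := by
  set R : ℝ := |x| + 1 with hRdef
  have hR1 : (1 : ℝ) ≤ R := by
    rw [hRdef]; linarith [abs_nonneg x]
  have hRpos : (0 : ℝ) < R := by linarith
  have hx : x ∈ Metric.ball (0 : ℝ) R := by
    rw [Metric.mem_ball, Real.dist_eq, sub_zero, hRdef]
    linarith
  have h0 : (0 : ℝ) ∈ Metric.ball (0 : ℝ) R := by
    rw [Metric.mem_ball, dist_self]
    exact hRpos
  set u : ℕ → ℝ := fun r => ((n : ℝ) * R ^ n) ^ r / r.factorial with hudef
  have hu : Summable u := Real.summable_pow_div_factorial _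
  have hbound : ∀ r : ℕ, ∀ y ∈ Metric.ball (0 : ℝ) R, ‖myg' n r y‖ ≤ u r := by
    intro r y hy
    apply myg'_bound n hn r hR1
    rw [Metric.mem_ball, Real.dist_eq, sub_zero] at hy
    exact le_of_lt hy
  have hderiv : ∀ r : ℕ, ∀ y ∈ Metric.ball (0 : ℝ) R, HasDerivAt (myg n r) (myg' n r y) y :=
    fun r y _ => myg_hasDerivAt n r y
  have hg0 : Summable (fun r => myg n r 0) := by
    have hz : (fun r => myg n r 0) = fun _ => (0 : ℝ) := by
      funext r
      unfold myg
      rw [zero_pow (by omega : 1 + n * r ≠ 0)]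
      simp
    rw [hz]
    exact summable_zero
  have hS : HasDerivAt (fun y => ∑' r, myg n r y) (∑' r, myg' n r x) x :=
    hasDerivAt_tsum_of_isPreconnected hu Metric.isOpen_ball
      (convex_ball (0 : ℝ) R).isPreconnected hderiv hbound h0 hg0 hx
  have hsum : Summable (fun r => myg n r x) :=
    summable_of_summable_hasDerivAt_of_isPreconnected hu Metric.isOpen_ball
      (convex_ball (0 : ℝ) R).isPreconnected hderiv hbound h0 hg0 hx
  have hsum' : Summable (fun r => myg' n r x) :=
    Summable.of_norm_bounded hu (fun r => hbound r x hx)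
  have h00 : myg' n 0 x = 1 := by
    unfold myg' myP
    norm_num
  have hshift : ∀ r : ℕ, myg' n (r + 1) x = -((n : ℝ) * x ^ (n - 1)) * myg n r x := by
    intro r
    unfold myg' myg
    have hPs : myP n (r + 1) = myP n r * (1 + ((r + 1 : ℕ) : ℝ) * n) := by
      unfold myP
      rw [Finset.prod_range_succ]
    rw [hPs]
    have hxe : x ^ (n * (r + 1)) = x ^ (n - 1) * x ^ (1 + n * r) := by
      rw [← pow_add]
      congr 1
      obtain ⟨m, rfl⟩ : ∃ m, n = m + 1 := ⟨n - 1, by omega⟩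
      simp only [Nat.succ_sub_one]
      ring
    rw [hxe]
    have hPpos := myP_pos n r
    have hne : (1 + ((r + 1 : ℕ) : ℝ) * n) ≠ 0 := by positivity
    have hcast : ((1 + n * (r + 1) : ℕ) : ℝ) = 1 + ((r + 1 : ℕ) : ℝ) * n := by
      push_cast; ring
    rw [hcast]
    field_simp
    ring
  have hT : ∑' r, myg' n r x = 1 - ((n : ℝ) * x ^ (n - 1)) * ∑' r, myg n r x := by
    calc ∑' r, myg' n r x = myg' n 0 x + ∑' r, myg' n (r + 1) x := Summable.tsum_eq_zero_add hsum'
      _ = 1 + ∑' r, -((n : ℝ) * x ^ (n - 1)) * myg n r x := by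
          rw [h00]; congr 1; exact tsum_congr hshift
      _ = 1 + -((n : ℝ) * x ^ (n - 1)) * ∑' r, myg n r x := by rw [tsum_mul_left]
      _ = 1 - ((n : ℝ) * x ^ (n - 1)) * ∑' r, myg n r x := by ring
  have hexp : HasDerivAt (fun y : ℝ => Real.exp (y ^ n))
      (Real.exp (x ^ n) * ((n : ℝ) * x ^ (n - 1))) x := (hasDerivAt_pow n x).exp
  have hmul := hexp.mul hS
  have hval : Real.exp (x ^ n) * ((n : ℝ) * x ^ (n - 1)) * (∑' r, myg n r x)
      + Real.exp (x ^ n) * (∑' r, myg' n r x) = Real.exp (x ^ n) := by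
    rw [hT]; ring
  have hmul' : HasDerivAt (fun y : ℝ => Real.exp (y ^ n) * ∑' r, myg n r y)
      (Real.exp (x ^ n)) x := hval ▸ hmul
  exact hmul'
end

section
/- For every positive integer n and every real x, the derivative of G(x) = e^{−x^n} · Σ_{r=0}^∞ n^r x^{1+nr} / ∏_{p=0}^r (1+pn) equals e^{−x^n}. -/
theorem stmt_1 (n : ℕ) (hn : 0 < n) (x : ℝ) :
    HasDerivAt (fun y : ℝ => Real.exp (-(y ^ n)) *
      ∑' r : ℕ, ((n : ℝ) ^ r * y ^ (1 + n * r)) /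
        ∏ p ∈ Finset.range (r + 1), (1 + (p : ℝ) * n))
      (Real.exp (-(x ^ n))) x := by
  set R : ℝ := |x| + 1 with hRdef
  have hR1 : (1:ℝ) ≤ R := by rw [hRdef]; have := abs_nonneg x; linarith
  set P : ℕ → ℝ := fun r => ∏ p ∈ Finset.range (r + 1), (1 + (p : ℝ) * n) with hPdef
  have hPpos : ∀ r, 0 < P r := by
    intro r
    apply Finset.prod_pos
    intro p _
    positivity
  have hPge : ∀ r, (n : ℝ) ^ r * r.factorial ≤ P r := by
    intro r
    induction r with
    | zero => simp [hPdef]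
    | succ r ih =>
      have : P (r+1) = P r * (1 + ((r+1 : ℕ) : ℝ) * n) := by
        simp [hPdef, Finset.prod_range_succ]
      rw [this]
      have h1 : ((r+1 : ℕ) : ℝ) * n ≤ 1 + ((r+1 : ℕ) : ℝ) * n := by linarith
      calc (n:ℝ) ^ (r+1) * (r+1).factorial
          = ((n:ℝ)^r * r.factorial) * (((r+1:ℕ):ℝ) * n) := by
            push_cast [Nat.factorial_succ]; ring
        _ ≤ P r * (((r+1:ℕ):ℝ) * n) := by
            apply mul_le_mul_of_nonneg_right ih; positivity
        _ ≤ P r * (1 + ((r+1:ℕ):ℝ) * n) := by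
            apply mul_le_mul_of_nonneg_left h1 (hPpos r).le
  set f : ℕ → ℝ → ℝ := fun r y => ((n : ℝ) ^ r * y ^ (1 + n * r)) / P r with hfdef
  set g : ℕ → ℝ → ℝ :=
    fun r y => ((n : ℝ) ^ r * ((1 + n * r : ℕ) : ℝ) * y ^ (n * r)) / P r with hgdef
  have hderiv : ∀ r y, HasDerivAt (f r) (g r y) y := by
    intro r y
    have h := ((hasDerivAt_pow (1 + n * r) y).const_mul ((n:ℝ)^r)).div_const (P r)
    refine h.congr_deriv ?_
    have : 1 + n * r - 1 = n * r := by omega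
    simp only [hgdef]
    rw [this]; ring
  set u : ℕ → ℝ := fun r => ((1 + n) * R ^ n) ^ r / r.factorial with hudef
  have hu : Summable u := Real.summable_pow_div_factorial _
  have hbound : ∀ r y, y ∈ Metric.ball (0:ℝ) R → ‖g r y‖ ≤ u r := by
    intro r y hy
    rw [Metric.mem_ball, dist_zero_right, Real.norm_eq_abs] at hy
    have hya : |y| ≤ R := hy.le
    have hnum : |(n : ℝ) ^ r * ((1 + n * r : ℕ) : ℝ) * y ^ (n * r)|
        ≤ (n:ℝ)^r * ((1:ℝ)+n)^r * R^(n*r) := by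
      rw [abs_mul, abs_mul, abs_pow, abs_pow]
      have h1 : |(n:ℝ)| = (n:ℝ) := abs_of_nonneg (by positivity)
      have h2 : |((1 + n * r : ℕ) : ℝ)| = ((1 + n * r : ℕ) : ℝ) := abs_of_nonneg (by positivity)
      rw [h1, h2]
      have h3 : ((1 + n * r : ℕ) : ℝ) ≤ ((1:ℝ)+n)^r := by
        push_cast
        have := one_add_mul_le_pow (a := (n:ℝ)) (by have : (0:ℝ) ≤ n := Nat.cast_nonneg n; linarith) r
        calc (1:ℝ) + n * r = 1 + (r:ℝ) * n := by ring
          _ ≤ (1 + (n:ℝ))^r := this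
      have h4 : |y|^(n*r) ≤ R^(n*r) := pow_le_pow_left₀ (abs_nonneg y) hya _
      calc (n:ℝ)^r * ((1 + n * r : ℕ) : ℝ) * |y|^(n*r)
          ≤ (n:ℝ)^r * ((1:ℝ)+n)^r * |y|^(n*r) := by
            apply mul_le_mul_of_nonneg_right _ (by positivity)
            exact mul_le_mul_of_nonneg_left h3 (by positivity)
        _ ≤ (n:ℝ)^r * ((1:ℝ)+n)^r * R^(n*r) := by
            apply mul_le_mul_of_nonneg_left h4 (by positivity)
    have hnr : (0:ℝ) < (n:ℝ)^r * r.factorial := by positivity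
    calc ‖g r y‖ = |(n : ℝ) ^ r * ((1 + n * r : ℕ) : ℝ) * y ^ (n * r)| / P r := by
          rw [hgdef]
          simp only [Real.norm_eq_abs, abs_div, abs_of_pos (hPpos r)]
      _ ≤ ((n:ℝ)^r * ((1:ℝ)+n)^r * R^(n*r)) / ((n:ℝ)^r * r.factorial) := by
          apply div_le_div₀ (by positivity) hnum hnr (hPge r)
      _ = u r := by
          simp only [hudef]
          rw [pow_mul, mul_pow]
          have h1 : ((n:ℝ))^r ≠ 0 := by positivity
          have h2 : ((r.factorial : ℝ)) ≠ 0 := by positivity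
          field_simp
  have hball : x ∈ Metric.ball (0:ℝ) R := by
    rw [Metric.mem_ball, dist_zero_right, Real.norm_eq_abs]; linarith
  have h0ball : (0:ℝ) ∈ Metric.ball (0:ℝ) R := by
    rw [Metric.mem_ball, dist_zero_right]; simp; linarith
  have hf0 : Summable fun r => f r 0 := by
    have : ∀ r, f r 0 = 0 := by
      intro r
      simp [hfdef, zero_pow (by omega : 1 + n * r ≠ 0)]
    simpa [this] using summable_zero
  have hS : HasDerivAt (fun y => ∑' r, f r y) (∑' r, g r x) x :=
    hasDerivAt_tsum_of_isPreconnected hu Metric.isOpen_ball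
      (convex_ball (0:ℝ) R).isPreconnected
      (fun r y _ => hderiv r y) (fun r y hy => hbound r y hy) h0ball hf0 hball
  have hgs : Summable fun r => g r x :=
    Summable.of_norm_bounded hu (fun r => hbound r x hball)
  -- key identity
  have hgsucc : ∀ r, g (r+1) x = (n:ℝ) * x ^ (n-1) * f r x := by
    intro r
    simp only [hgdef, hfdef]
    have hP : P (r+1) = P r * (1 + ((r+1 : ℕ) : ℝ) * n) := by
      simp [hPdef, Finset.prod_range_succ]
    have hcast : ((1 + n * (r+1) : ℕ) : ℝ) = 1 + ((r+1 : ℕ) : ℝ) * n := by push_cast; ring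
    have he : n * (r+1) = (n-1) + (1 + n * r) := by
      cases n with
      | zero => omega
      | succ m => simp only [Nat.succ_sub_one]; ring
    have hpow : x ^ (n * (r+1)) = x ^ (n-1) * x ^ (1 + n * r) := by
      rw [he, pow_add]
    have hfac : (1:ℝ) + ((r+1 : ℕ) : ℝ) * n ≠ 0 := by positivity
    rw [hP, hcast, hpow]
    field_simp
    ring
  have hkey : ∑' r, g r x = 1 + (n:ℝ) * x ^ (n-1) * ∑' r, f r x := by
    rw [Summable.tsum_eq_zero_add hgs]
    have hg0 : g 0 x = 1 := by
      simp [hgdef, hPdef]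
    rw [hg0]
    congr 1
    calc ∑' r, g (r+1) x = ∑' r, (n:ℝ) * x ^ (n-1) * f r x := tsum_congr hgsucc
      _ = (n:ℝ) * x ^ (n-1) * ∑' r, f r x := tsum_mul_left
  have hE : HasDerivAt (fun y : ℝ => Real.exp (-(y ^ n)))
      (Real.exp (-(x ^ n)) * -((n:ℝ) * x ^ (n-1))) x :=
    ((hasDerivAt_pow n x).neg).exp
  have hmul := hE.mul hS
  refine hmul.congr_deriv ?_
  rw [hkey]
  ring
end

section
/- For every positive integer n and every nonnegative integer m, the identity 1/(m!·(n·m+1)) = (−1)^m · Σ_{r=0}^m (−1)^r n^{m−r} / ( r! · ∏_{p=0}^{m−r} (1+pn) ) holds. -/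
open Finset

lemma alt_sum_real (N : ℕ) :
    ∑ j ∈ range (N + 1), (-1 : ℝ) ^ j * (N.choose j) = if N = 0 then 1 else 0 := by
  have := Int.alternating_sum_range_choose (n := N)
  have h2 : ((∑ m ∈ range (N + 1), ((-1) ^ m * N.choose m : ℤ) : ℤ) : ℝ)
      = ∑ j ∈ range (N + 1), (-1 : ℝ) ^ j * (N.choose j) := by
    push_cast
    rfl
  rw [← h2, this]
  split <;> simp

lemma lemA (m : ℕ) : ∀ x : ℝ, 0 < x →
    ∑ s ∈ range (m + 1), (-1 : ℝ) ^ s * (m.choose s) / (x + s) =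
      (m.factorial : ℝ) / ∏ p ∈ range (m + 1), (x + p) := by
  induction m with
  | zero => intro x hx; simp
  | succ m ih =>
    intro x hx
    have hP : (0 : ℝ) < ∏ p ∈ range (m + 1), (x + p) := by
      apply prod_pos; intro p _; positivity
    have hQ : (0 : ℝ) < ∏ p ∈ range (m + 1), ((x + 1) + p) := by
      apply prod_pos; intro p _; positivity
    have hF1 : ((-1 : ℝ) ^ (m+1) * (m.choose (m+1)) / (x + (m+1))) = 0 := by
      simp [Nat.choose_succ_self]
    have key : ∑ s ∈ range (m + 2), (-1 : ℝ) ^ s * ((m+1).choose s) / (x + s)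
        = (∑ s ∈ range (m + 1), (-1 : ℝ) ^ s * (m.choose s) / (x + s))
          - ∑ s ∈ range (m + 1), (-1 : ℝ) ^ s * (m.choose s) / ((x + 1) + s) := by
      rw [Finset.sum_range_succ' (fun s => (-1 : ℝ) ^ s * ((m+1).choose s) / (x + s)) (m+1)]
      have hsplit : ∀ s ∈ range (m+1),
          (-1 : ℝ) ^ (s+1) * ((m+1).choose (s+1)) / (x + ((s+1 : ℕ) : ℝ))
          = (-1 : ℝ) ^ (s+1) * (m.choose (s+1)) / (x + ((s+1 : ℕ) : ℝ))
            - (-1 : ℝ) ^ s * (m.choose s) / ((x + 1) + s) := by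
        intro s _
        rw [Nat.choose_succ_succ]
        push_cast
        ring
      rw [Finset.sum_congr rfl hsplit, Finset.sum_sub_distrib]
      have h2 : ∑ s ∈ range (m + 1), (-1 : ℝ) ^ (s+1) * (m.choose (s+1)) / (x + ((s+1 : ℕ) : ℝ))
          = (∑ s ∈ range (m + 1), (-1 : ℝ) ^ s * (m.choose s) / (x + s))
            - (-1 : ℝ) ^ 0 * (m.choose 0) / (x + ((0:ℕ) : ℝ)) := by
        have h4 := Finset.sum_range_succ' (fun s => (-1 : ℝ) ^ s * (m.choose s) / (x + s)) (m+1)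
        have h3 := Finset.sum_range_succ (fun s => (-1 : ℝ) ^ s * (m.choose s) / (x + s)) (m+1)
        push_cast at h3
        rw [h3, hF1, add_zero] at h4
        rw [eq_sub_iff_add_eq, ← h4]
      rw [h2]
      simp
      ring
    rw [key, ih x hx, ih (x+1) (by linarith)]
    have hR : ∏ p ∈ range (m + 2), (x + p) = (∏ p ∈ range (m + 1), (x + p)) * (x + (m+1)) := by
      rw [Finset.prod_range_succ]; push_cast; ring
    have hRx : ∏ p ∈ range (m + 2), (x + p) = (∏ p ∈ range (m + 1), ((x+1) + p)) * x := by
      rw [Finset.prod_range_succ' (fun p => (x + p))]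
      push_cast
      simp only [add_zero]
      congr 1
      apply Finset.prod_congr rfl
      intro p _; push_cast; ring
    have hT : (∏ p ∈ range (m + 1), ((x+1) + p)) * x
        = (∏ p ∈ range (m + 1), (x + p)) * (x + (↑m + 1)) := by
      rw [← hRx, hR]
    have hfac : ((m+1).factorial : ℝ) = (m.factorial : ℝ) * (m + 1) := by
      rw [Nat.factorial_succ]; push_cast; ring
    rw [hR, hfac, div_sub_div _ _ (ne_of_gt hP) (ne_of_gt hQ),
      div_eq_div_iff (by positivity) (by positivity)]
    linear_combination ((m.factorial : ℝ) * ∏ p ∈ range (m + 1), (x + p)) * hT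

lemma chooseInnerSum (m k : ℕ) (hk : k ≤ m) :
    ∑ s ∈ range (m + 1), (-1 : ℝ) ^ s * (m.choose s) * (s.choose k)
      = (-1 : ℝ) ^ k * (m.choose k) * (if m = k then 1 else 0) := by
  have hsub : Finset.Ico k (m + 1) ⊆ range (m + 1) := by
    rw [Finset.range_eq_Ico]; exact Finset.Ico_subset_Ico (Nat.zero_le _) le_rfl
  have hvan : ∀ s ∈ range (m + 1), s ∉ Finset.Ico k (m + 1) →
      (-1 : ℝ) ^ s * (m.choose s) * (s.choose k) = 0 := by
    intro s hs hsn
    have hs' : s < m + 1 := Finset.mem_range.mp hs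
    have : s < k := by
      by_contra hcon
      exact hsn (Finset.mem_Ico.mpr ⟨Nat.le_of_not_lt hcon, hs'⟩)
    simp [Nat.choose_eq_zero_of_lt this]
  rw [← Finset.sum_subset hsub hvan, Finset.sum_Ico_eq_sum_range]
  have hterm : ∀ i ∈ range (m + 1 - k),
      (-1 : ℝ) ^ (k + i) * (m.choose (k + i)) * ((k + i).choose k)
        = ((-1 : ℝ) ^ k * (m.choose k)) * ((-1 : ℝ) ^ i * ((m - k).choose i)) := by
    intro i hi
    have hi' : i < m + 1 - k := Finset.mem_range.mp hi
    have hle : k + i ≤ m := by omega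
    have hcm : m.choose (k + i) * (k + i).choose k = m.choose k * (m - k).choose (k + i - k) :=
      Nat.choose_mul (Nat.le_add_right k i)
    rw [Nat.add_sub_cancel_left] at hcm
    have hcmR : ((m.choose (k + i) : ℝ)) * ((k + i).choose k) = (m.choose k : ℝ) * ((m - k).choose i) := by
      exact_mod_cast congrArg (Nat.cast : ℕ → ℝ) hcm
    calc (-1 : ℝ) ^ (k + i) * (m.choose (k + i)) * ((k + i).choose k)
        = (-1 : ℝ) ^ (k + i) * ((m.choose (k + i) : ℝ) * ((k + i).choose k)) := by ring
      _ = (-1 : ℝ) ^ (k + i) * ((m.choose k : ℝ) * ((m - k).choose i)) := by rw [hcmR]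
      _ = ((-1 : ℝ) ^ k * (m.choose k)) * ((-1 : ℝ) ^ i * ((m - k).choose i)) := by
          rw [pow_add]; ring
  rw [Finset.sum_congr rfl hterm, ← Finset.mul_sum]
  have hrange : m + 1 - k = (m - k) + 1 := by omega
  rw [hrange, alt_sum_real (m - k)]
  congr 1
  have : (m - k = 0) ↔ (m = k) := by omega
  simp [this]

lemma inversion (f g : ℕ → ℝ)
    (h : ∀ M, f M = ∑ s ∈ range (M + 1), (-1 : ℝ) ^ s * (M.choose s) * g s) (m : ℕ) :
    g m = ∑ s ∈ range (m + 1), (-1 : ℝ) ^ s * (m.choose s) * f s := by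
  have step1 : ∑ s ∈ range (m + 1), (-1 : ℝ) ^ s * (m.choose s) * f s
      = ∑ s ∈ range (m + 1), ∑ k ∈ range (m + 1),
          (-1 : ℝ) ^ s * (m.choose s) * ((-1 : ℝ) ^ k * (s.choose k) * g k) := by
    apply Finset.sum_congr rfl
    intro s hs
    rw [h s, Finset.mul_sum]
    apply Finset.sum_subset
    · exact Finset.range_subset_range.mpr (by have := Finset.mem_range.mp hs; omega)
    · intro k _ hkn
      have : s < k := by
        by_contra hcon
        exact hkn (Finset.mem_range.mpr (by omega))
      simp [Nat.choose_eq_zero_of_lt this]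
  rw [step1, Finset.sum_comm]
  have step2 : ∀ k ∈ range (m + 1),
      ∑ s ∈ range (m + 1), (-1 : ℝ) ^ s * (m.choose s) * ((-1 : ℝ) ^ k * (s.choose k) * g k)
        = ((-1 : ℝ) ^ k * g k) * ∑ s ∈ range (m + 1), (-1 : ℝ) ^ s * (m.choose s) * (s.choose k) := by
    intro k _
    rw [Finset.mul_sum]
    apply Finset.sum_congr rfl
    intro s _
    ring
  rw [Finset.sum_congr rfl step2]
  have step3 : ∀ k ∈ range (m + 1),
      ((-1 : ℝ) ^ k * g k) * ∑ s ∈ range (m + 1), (-1 : ℝ) ^ s * (m.choose s) * (s.choose k)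
        = if m = k then g k else 0 := by
    intro k hk
    rw [chooseInnerSum m k (by have := Finset.mem_range.mp hk; omega)]
    by_cases hmk : m = k
    · simp only [hmk, if_pos rfl, Nat.choose_self, Nat.cast_one, mul_one]
      have : ((-1:ℝ)^k * (-1)^k) = 1 := by
        rw [← pow_add]
        simp [pow_add, ← two_mul, pow_mul]
      simp only [if_true]
      linear_combination (g k) * this
    · simp [hmk]
  rw [Finset.sum_congr rfl step3, Finset.sum_ite_eq (range (m + 1)) m g]
  simp

theorem stmt_3 (n : ℕ) (hn : 0 < n) (m : ℕ) :
    (1 : ℝ) / ((m.factorial : ℝ) * ((n : ℝ) * m + 1)) =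
      (-1 : ℝ) ^ m * ∑ r ∈ Finset.range (m + 1),
        ((-1 : ℝ) ^ r * (n : ℝ) ^ (m - r)) /
          ((r.factorial : ℝ) * ∏ p ∈ Finset.range (m - r + 1), (1 + (p : ℝ) * n)) := by
  have hn' : (0 : ℝ) < n := by exact_mod_cast hn
  have hPpos : ∀ s : ℕ, (0 : ℝ) < ∏ p ∈ range (s + 1), (1 + (p : ℝ) * n) := by
    intro s; apply Finset.prod_pos; intro p _; positivity
  set g : ℕ → ℝ := fun s => (s.factorial : ℝ) * (n : ℝ) ^ s
      / (∏ p ∈ range (s + 1), (1 + (p : ℝ) * n)) with hg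
  set f : ℕ → ℝ := fun s => 1 / ((n : ℝ) * s + 1) with hf
  have hstep1 : ∀ M, g M = ∑ s ∈ range (M + 1), (-1 : ℝ) ^ s * (M.choose s) * f s := by
    intro M
    have hA := lemA M (1 / (n : ℝ)) (by positivity)
    have hprod : ∏ p ∈ range (M + 1), ((1 : ℝ) / n + p)
        = (∏ p ∈ range (M + 1), (1 + (p : ℝ) * n)) * ((1 : ℝ) / n) ^ (M + 1) := by
      calc ∏ p ∈ range (M + 1), ((1 : ℝ) / n + p)
          = ∏ p ∈ range (M + 1), ((1 + (p : ℝ) * n) * (1 / n)) := by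
            apply Finset.prod_congr rfl; intro p _; field_simp
        _ = (∏ p ∈ range (M + 1), (1 + (p : ℝ) * n)) * ((1 : ℝ) / n) ^ (M + 1) := by
            rw [Finset.prod_mul_distrib, Finset.prod_const, Finset.card_range]
    have hsum : ∑ s ∈ range (M + 1), (-1 : ℝ) ^ s * (M.choose s) / (1 / (n : ℝ) + s)
        = (n : ℝ) * ∑ s ∈ range (M + 1), (-1 : ℝ) ^ s * (M.choose s) * f s := by
      rw [Finset.mul_sum]
      apply Finset.sum_congr rfl
      intro s _
      have hd2 : (0 : ℝ) < (n : ℝ) * s + 1 := by positivity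
      rw [hf]
      rw [show (1 : ℝ) / n + s = ((n : ℝ) * s + 1) / n by field_simp; ring]
      rw [div_div_eq_mul_div]
      field_simp
    rw [hsum, hprod] at hA
    apply mul_left_cancel₀ (ne_of_gt hn')
    rw [hA, hg]
    simp only []
    rw [div_pow, one_pow]
    have hPne := (hPpos M).ne'
    field_simp
    ring
  have hstep2 := inversion g f hstep1 m
  have hreflect := Finset.sum_range_reflect
    (fun r => ((-1 : ℝ) ^ r * (n : ℝ) ^ (m - r)) /
      ((r.factorial : ℝ) * ∏ p ∈ range (m - r + 1), (1 + (p : ℝ) * n))) (m + 1)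
  simp only [Nat.add_sub_cancel] at hreflect
  rw [← hreflect, Finset.mul_sum]
  have hterm : ∀ s ∈ range (m + 1),
      (-1 : ℝ) ^ m * (((-1 : ℝ) ^ (m - s) * (n : ℝ) ^ (m - (m - s))) /
        (((m - s).factorial : ℝ) * ∏ p ∈ range (m - (m - s) + 1), (1 + (p : ℝ) * n)))
      = (1 / (m.factorial : ℝ)) * ((-1 : ℝ) ^ s * (m.choose s) * g s) := by
    intro s hs
    have hsm : s ≤ m := by have := Finset.mem_range.mp hs; omega
    rw [Nat.sub_sub_self hsm]
    have h1 : (-1 : ℝ) ^ (m - s) * (-1) ^ s = (-1) ^ m := by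
      rw [← pow_add, Nat.sub_add_cancel hsm]
    have hs2 : (-1 : ℝ) ^ s * (-1) ^ s = 1 := by
      rw [← pow_add, ← two_mul, pow_mul]; norm_num
    have hm2 : (-1 : ℝ) ^ m * (-1) ^ m = 1 := by
      rw [← pow_add, ← two_mul, pow_mul]; norm_num
    have hsign : (-1 : ℝ) ^ (m - s) = (-1) ^ m * (-1) ^ s := by
      linear_combination ((-1 : ℝ) ^ s) * h1 - ((-1 : ℝ) ^ (m - s)) * hs2
    rw [hsign, hg]
    simp only []
    have hc : ((m.choose s : ℝ)) * (s.factorial : ℝ) * ((m - s).factorial : ℝ)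
        = (m.factorial : ℝ) := by
      exact_mod_cast congrArg (Nat.cast : ℕ → ℝ) (Nat.choose_mul_factorial_mul_factorial hsm)
    have hP := (hPpos s).ne'
    have hf1 : ((m - s).factorial : ℝ) ≠ 0 := by positivity
    have hf2 : (m.factorial : ℝ) ≠ 0 := by positivity
    calc (-1 : ℝ) ^ m * (((-1 : ℝ) ^ m * (-1) ^ s * (n : ℝ) ^ s) /
          (((m - s).factorial : ℝ) * ∏ p ∈ range (s + 1), (1 + (p : ℝ) * n)))
        = ((-1 : ℝ) ^ m * (-1) ^ m) * (((-1 : ℝ) ^ s * (n : ℝ) ^ s) /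
          (((m - s).factorial : ℝ) * ∏ p ∈ range (s + 1), (1 + (p : ℝ) * n))) := by ring
      _ = ((-1 : ℝ) ^ s * (n : ℝ) ^ s) /
          (((m - s).factorial : ℝ) * ∏ p ∈ range (s + 1), (1 + (p : ℝ) * n)) := by
          rw [hm2, one_mul]
      _ = (1 / (m.factorial : ℝ)) * ((-1 : ℝ) ^ s * (m.choose s) *
          ((s.factorial : ℝ) * (n : ℝ) ^ s / ∏ p ∈ range (s + 1), (1 + (p : ℝ) * n))) := by
          generalize (∏ p ∈ range (s + 1), (1 + (p : ℝ) * n)) = P at hP ⊢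
          have hch : (m.choose s : ℝ) ≠ 0 := Nat.cast_ne_zero.mpr (Nat.choose_pos hsm).ne'
          rw [← hc]
          field_simp
  rw [Finset.sum_congr rfl hterm, ← Finset.mul_sum, ← hstep2, hf]
  simp only []
  rw [one_div_mul_one_div]
end

section
/- For the generalized normal distribution with even order parameter n, m_{kn} = (σ^n)^k · ∏_{r=0}^{k−1} (1 + rn) for every positive integer k, where m_{2q} = (n^{1/n}σ)^{2q} Γ((2q+1)/n)/Γ(1/n). -/
lemma gamma_add_nat_aux (x : ℝ) (hx : 0 < x) (k : ℕ) :
    Real.Gamma (k + x) = (∏ r ∈ Finset.range k, (x + r)) * Real.Gamma x := by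
  induction k with
  | zero => simp
  | succ m ih =>
    have h : ((m + 1 : ℕ) : ℝ) + x = (m + x) + 1 := by push_cast; ring
    have hne : (m : ℝ) + x ≠ 0 := by positivity
    rw [h, Real.Gamma_add_one hne, ih, Finset.prod_range_succ]
    ring

theorem stmt_16 (n : ℕ) (hn : 0 < n) (j : ℕ) (hj : n = 2 * j)
    (σ : ℝ) (hσ : 0 < σ) (k : ℕ) (hk : 0 < k)
    (M : ℕ → ℝ)
    (hM : M = fun q : ℕ => ((n : ℝ) ^ ((1 : ℝ) / n) * σ) ^ (2 * q) *
      Real.Gamma ((2 * q + 1) / n) / Real.Gamma (1 / n)) :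
    M (k * j) = (σ ^ n) ^ k * ∏ r ∈ Finset.range k, (1 + (r : ℝ) * n) := by
  subst hM
  have hnR : (0:ℝ) < n := by exact_mod_cast hn
  have hnne : (n:ℝ) ≠ 0 := ne_of_gt hnR
  have h2 : 2 * (k * j) = k * n := by rw [hj]; ring
  simp only [h2]
  have hx : (0:ℝ) < 1/n := by positivity
  have hΓ : Real.Gamma (1/n) ≠ 0 :=
    ne_of_gt (Real.Gamma_pos_of_pos hx)
  have harg : (2 * ((k * j : ℕ) : ℝ) + 1) / n = k + 1/n := by
    have hjpos : 0 < j := by omega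
    have hjne : (j:ℝ) ≠ 0 := by positivity
    rw [hj]; push_cast; field_simp
  rw [harg, gamma_add_nat_aux _ hx k]
  -- pow part
  have hpow : ((n : ℝ) ^ ((1 : ℝ) / n) * σ) ^ (k * n) =
      (n:ℝ) ^ k * (σ ^ n) ^ k := by
    rw [mul_pow, ← pow_mul σ n k, mul_comm n k]
    congr 1
    rw [← Real.rpow_natCast ((n:ℝ) ^ ((1:ℝ)/n)) (k*n),
        ← Real.rpow_natCast ((n:ℝ)) k,
        ← Real.rpow_mul (le_of_lt hnR)]
    congr 1
    push_cast
    field_simp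
  rw [hpow]
  rw [mul_div_assoc, mul_div_assoc, div_self hΓ, mul_one]
  rw [mul_comm ((n:ℝ)^k) ((σ^n)^k), mul_assoc]
  congr 1
  rw [show ((n:ℝ))^k = ∏ _r ∈ Finset.range k, (n:ℝ) by simp,
      ← Finset.prod_mul_distrib]
  apply Finset.prod_congr rfl
  intro r _
  field_simp
end
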